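/- arXiv:1503.00108 — 3 statements merged into one kernel-verified Lean document; each statement's English description precedes it below -/
import Mathlib

section
/- Let f : R → T be a homomorphism of commutative rings and let φ_T be a function from the set of ideals of T to itself. Define φ_R on ideals of R by φ_R(I) = (φ_T(Iᵉ))ᶜ, i.e. the contraction f⁻¹(φ_T(I·T)) of φ_T applied to the extension of I. If J is a φ_T-n-absorbing primary ideal of T such that φ_T(J) ⊆ φ_T(Jᶜᵉ) (where Jᶜᵉ is the extension to T of the contraction f⁻¹(J)), then Jᶜ = f⁻¹(J) is a φ_R-n-absorbing primary ideal of R. -/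
/-- A proper ideal `I` is `φ`-`n`-absorbing primary. -/
def IsPhiNAbsorbingPrimary {S : Type*} [CommRing S] (φ : Ideal S → Ideal S) (n : ℕ)
    (I : Ideal S) : Prop :=
  I ≠ ⊤ ∧ ∀ a : Fin (n + 1) → S,
    (∏ i, a i) ∈ I → (∏ i, a i) ∉ φ I →
      ((∏ i : Fin n, a i.castSucc) ∈ I ∨
        ∃ i : Fin n, (∏ j ∈ Finset.univ.erase i.castSucc, a j) ∈ I.radical)

/-- Theorem 2.24: if `f : R → T` is a ring homomorphism, `φ_R(I) := (φ_T(Iᵉ))ᶜ`,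
and `J` is a `φ_T`-`n`-absorbing primary ideal of `T` with
`φ_T(J) ⊆ φ_T(Jᶜᵉ)`, then `Jᶜ` is a `φ_R`-`n`-absorbing primary ideal of `R`. -/
theorem stmt_10 {R T : Type*} [CommRing R] [CommRing T] [Nontrivial R] [Nontrivial T]
    (n : ℕ) (hn : 0 < n) (f : R →+* T) (φT : Ideal T → Ideal T)
    (J : Ideal T) (hJ : IsPhiNAbsorbingPrimary φT n J)
    (hce : φT J ≤ φT ((J.comap f).map f)) :
    IsPhiNAbsorbingPrimary (fun I : Ideal R => (φT (I.map f)).comap f) n (J.comap f) := by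
  obtain ⟨hJne, hJabs⟩ := hJ
  constructor
  · intro h
    apply hJne
    rw [Ideal.eq_top_iff_one] at h ⊢
    simpa using h
  · intro a hmem hnot
    have h1 : (∏ i, f (a i)) ∈ J := by
      rw [← map_prod]; exact hmem
    have h2 : (∏ i, f (a i)) ∉ φT J := by
      intro h
      apply hnot
      simp only [Ideal.mem_comap, map_prod]
      exact hce h
    rcases hJabs (fun i => f (a i)) h1 h2 with h | ⟨i, hi⟩
    · left
      rw [Ideal.mem_comap, map_prod]; exact h
    · right
      refine ⟨i, ?_⟩
      rw [← Ideal.comap_radical, Ideal.mem_comap, map_prod]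
      exact hi
end

section
/- Let n ≥ 2 be a natural number and let R = R₁ × R₂ × ⋯ × R_{n+1} be a direct product of n+1 commutative rings with 1 ≠ 0. Then the following conditions are equivalent: (1) R is a von Neumann regular ring; (2) every proper ideal of R is an n-almost n-absorbing primary ideal of R (i.e. φ_n-n-absorbing primary, where φ_n(J) = Jⁿ); (3) every proper ideal of R is an ω-n-absorbing primary ideal of R (i.e. φ_ω-n-absorbing primary, where φ_ω(J) = ⋂_{m=1}^{∞} Jᵐ); (4) every proper ideal of R is an n-almost n-absorbing ideal of R (i.e. φ_n-n-absorbing). -/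
/-- A proper ideal `P` is `φ`-`n`-absorbing. -/
def IsPhiNAbsorbing {S : Type*} [CommRing S] (φ : Ideal S → Ideal S) (n : ℕ)
    (P : Ideal S) : Prop :=
  P ≠ ⊤ ∧ ∀ a : Fin (n + 1) → S,
    (∏ i, a i) ∈ P → (∏ i, a i) ∉ φ P →
      ∃ i : Fin (n + 1), (∏ j ∈ Finset.univ.erase i, a j) ∈ P

/-- A commutative ring is von Neumann regular. -/
def IsVNRegular (S : Type*) [CommRing S] : Prop :=
  ∀ a : S, ∃ b : S, a = a * b * a

/-- The function `φ_ω : J ↦ ⋂_{m ≥ 1} Jᵐ`. -/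
noncomputable def phiOmega {S : Type*} [CommRing S] (J : Ideal S) : Ideal S :=
  ⨅ m : ℕ, J ^ (m + 1)

section Aux

set_option linter.unusedSectionVars false

variable {n : ℕ} {R : Fin (n + 1) → Type*} [∀ i, CommRing (R i)] [∀ i, Nontrivial (R i)]
variable (k : Fin (n + 1)) (a : R k)

/-- The generator `(0, …, 0, a, 0, …, 0)` with `a` at slot `k`. -/
private def vv : ∀ i, R i := Pi.single k a

/-- The test family: `cc 0` is `1` everywhere except `a` at slot `k`;
for `j ≠ 0`, `cc j` is `1` everywhere except `0` at slot `swap 0 k j`. -/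
private def cc : Fin (n + 1) → ∀ i, R i := fun j =>
  if j = 0 then Function.update (1 : ∀ i, R i) k a
  else Function.update (1 : ∀ i, R i) (Equiv.swap 0 k j) 0

private lemma swap_ne_k {j : Fin (n + 1)} (hj : j ≠ 0) : Equiv.swap 0 k j ≠ k := fun h =>
  hj ((Equiv.swap 0 k).injective (h.trans (Equiv.swap_apply_left 0 k).symm))

private lemma ccA {j i : Fin (n + 1)} (hik : i ≠ k) (hj : j ≠ Equiv.swap 0 k i) :
    cc k a j i = 1 := by
  by_cases h0 : j = 0
  · subst h0; simp [cc, Function.update_of_ne hik]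
  · have hne : Equiv.swap 0 k j ≠ i := fun he => hj (by rw [← he, Equiv.swap_apply_self])
    simp [cc, h0, Function.update_of_ne (Ne.symm hne)]

private lemma ccB {j : Fin (n + 1)} (hj : j ≠ 0) : cc k a j k = 1 := by
  have hne : Equiv.swap 0 k j ≠ k := swap_ne_k k hj
  simp [cc, hj, Function.update_of_ne (Ne.symm hne)]

private lemma prod_all : (∏ j, cc k a j) = vv k a := by
  funext i
  rw [Finset.prod_apply]
  by_cases hik : i = k
  · subst hik
    rw [← Finset.mul_prod_erase Finset.univ _ (Finset.mem_univ 0)]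
    rw [Finset.prod_eq_one fun j hj => ccB i a (Finset.ne_of_mem_erase hj), mul_one]
    simp [cc, vv]
  · have hj0 : Equiv.swap 0 k i ≠ 0 := fun h => hik (by
      have h2 := congrArg (Equiv.swap 0 k) h
      rwa [Equiv.swap_apply_self, Equiv.swap_apply_left] at h2)
    refine (Finset.prod_eq_zero (Finset.mem_univ (Equiv.swap 0 k i)) ?_).trans ?_
    · show cc k a (Equiv.swap 0 k i) i = 0
      unfold cc
      rw [if_neg hj0, Equiv.swap_apply_self, Function.update_self]
    · simp [vv, Pi.single_eq_of_ne hik]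

private lemma mem_span_vv {x : ∀ i, R i} (h : x ∈ Ideal.span {vv k a}) :
    ∃ r : ∀ i, R i, x = vv k a * r :=
  Ideal.mem_span_singleton.mp h

private lemma mem_comp_eq_zero {x : ∀ i, R i} (h : x ∈ Ideal.span {vv k a})
    {i : Fin (n + 1)} (hik : i ≠ k) : x i = 0 := by
  obtain ⟨r, hr⟩ := mem_span_vv k a h
  have hv : vv k a i = 0 := by simp [vv, Pi.single_eq_of_ne hik]
  rw [hr, Pi.mul_apply, hv, zero_mul]

private lemma not_mem_radical {x : ∀ i, R i} (i : Fin (n + 1)) (hik : i ≠ k)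
    (hxi : x i = 1) : x ∉ (Ideal.span {vv k a}).radical := by
  intro hx
  obtain ⟨m, hm⟩ := Ideal.mem_radical_iff.mp hx
  have h0 := mem_comp_eq_zero k a hm hik
  rw [Pi.pow_apply, hxi, one_pow] at h0
  exact one_ne_zero h0

private lemma span_ne_top (hn : 2 ≤ n) : Ideal.span {vv k a} ≠ ⊤ := by
  intro h
  haveI : Nontrivial (Fin (n + 1)) := by
    obtain ⟨m, rfl⟩ : ∃ m, n = m + 1 := ⟨n - 1, by omega⟩
    exact Fin.nontrivial_iff_two_le.mpr (by omega)
  obtain ⟨i, hik⟩ := exists_ne k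
  have h1 : (1 : ∀ i, R i) ∈ Ideal.span {vv k a} := h ▸ Submodule.mem_top
  have h0 := mem_comp_eq_zero k a h1 hik
  rw [Pi.one_apply] at h0
  exact one_ne_zero h0

private lemma prodcc_mem : (∏ j, cc k a j) ∈ Ideal.span {vv k a} := by
  rw [prod_all]; exact Ideal.mem_span_singleton_self _

private lemma sq_case (h : (∏ j, cc k a j) ∈ Ideal.span {vv k a} ^ 2) :
    ∃ b, a = a * b * a := by
  rw [prod_all, Ideal.span_singleton_pow, Ideal.mem_span_singleton] at h
  obtain ⟨r, hr⟩ := h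
  have hk := congrFun hr k
  have hv : vv k a k = a := by simp [vv]
  rw [Pi.mul_apply, Pi.pow_apply, hv] at hk
  exact ⟨r k, by linear_combination hk⟩

private lemma prod_erase_comp (i₀ : Fin (n + 1)) (h0 : i₀ ≠ 0) :
    (∏ j ∈ Finset.univ.erase i₀, cc k a j) (Equiv.swap 0 k i₀) = 1 := by
  rw [Finset.prod_apply]
  refine Finset.prod_eq_one fun j hj => ?_
  refine ccA k a (swap_ne_k k h0) fun he => ?_
  rw [Equiv.swap_apply_self] at he
  exact Finset.ne_of_mem_erase hj he

private lemma prod_castSucc_comp (hn : 2 ≤ n) :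
    (∏ i : Fin n, cc k a i.castSucc) (Equiv.swap 0 k (Fin.last n)) = 1 := by
  have hlast : (Fin.last n) ≠ 0 := by
    simp only [ne_eq, Fin.ext_iff, Fin.val_last, Fin.val_zero]; omega
  rw [Finset.prod_apply]
  refine Finset.prod_eq_one fun i _ => ?_
  refine ccA k a (swap_ne_k k hlast) fun he => ?_
  rw [Equiv.swap_apply_self] at he
  exact ne_of_lt (Fin.castSucc_lt_last i) he

private lemma radical_case_zero
    (h : (∏ j ∈ Finset.univ.erase (0 : Fin (n + 1)), cc k a j) ∈
      (Ideal.span {vv k a}).radical) : ∃ b, a = a * b * a := by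
  have hk1 : (∏ j ∈ Finset.univ.erase (0 : Fin (n + 1)), cc k a j) k = 1 := by
    rw [Finset.prod_apply]
    exact Finset.prod_eq_one fun j hj => ccB k a (Finset.ne_of_mem_erase hj)
  obtain ⟨m, hm⟩ := Ideal.mem_radical_iff.mp h
  obtain ⟨r, hr⟩ := mem_span_vv k a hm
  have hk := congrFun hr k
  have hv : vv k a k = a := by simp [vv]
  rw [Pi.pow_apply, hk1, one_pow, Pi.mul_apply, hv] at hk
  exact ⟨r k, by linear_combination a * hk⟩

private lemma hard_core (hn : 2 ≤ n)
    (H : (∏ i : Fin n, cc k a i.castSucc) ∈ Ideal.span {vv k a} ∨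
      ∃ i : Fin n, (∏ j ∈ Finset.univ.erase i.castSucc, cc k a j) ∈
        (Ideal.span {vv k a}).radical) :
    ∃ b, a = a * b * a := by
  have hlast : (Fin.last n) ≠ 0 := by
    simp only [ne_eq, Fin.ext_iff, Fin.val_last, Fin.val_zero]; omega
  rcases H with h | ⟨i, h⟩
  · exfalso
    have h0 := mem_comp_eq_zero k a h (swap_ne_k k hlast)
    rw [prod_castSucc_comp k a hn] at h0
    exact one_ne_zero h0
  · by_cases hi0 : i.castSucc = 0
    · rw [hi0] at h
      exact radical_case_zero k a h
    · exact absurd h (not_mem_radical k a _ (swap_ne_k k hi0) (prod_erase_comp k a _ hi0))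

private lemma vn_of_components
    (h : ∀ (k : Fin (n + 1)) (a : R k), ∃ b, a = a * b * a) :
    IsVNRegular (∀ i, R i) := by
  intro x
  choose b hb using fun k => h k (x k)
  exact ⟨b, funext fun i => by rw [Pi.mul_apply, Pi.mul_apply]; exact hb i⟩

end Aux

private lemma vn_pow_eq {S : Type*} [CommRing S] (h : IsVNRegular S) (I : Ideal S) :
    ∀ m : ℕ, I ^ (m + 1) = I := by
  have h2 : I ^ 2 = I := by
    refine le_antisymm (Ideal.pow_le_self two_ne_zero) fun x hx => ?_
    obtain ⟨b, hb⟩ := h x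
    have hxx : x * b * x ∈ I ^ 2 := by
      rw [sq]; exact Ideal.mul_mem_mul (I.mul_mem_right b hx) hx
    rwa [← hb] at hxx
  intro m
  induction m with
  | zero => exact pow_one I
  | succ p ih => rw [pow_succ, ih, ← sq, h2]

private lemma vn_pow_n {S : Type*} [CommRing S] (h : IsVNRegular S) (I : Ideal S)
    {n : ℕ} (hn : 2 ≤ n) : I ^ n = I := by
  obtain ⟨m, rfl⟩ : ∃ m, n = m + 1 := ⟨n - 1, by omega⟩
  exact vn_pow_eq h I m

private lemma vn_phiOmega {S : Type*} [CommRing S] (h : IsVNRegular S) (I : Ideal S) :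
    phiOmega I = I := by
  simp [phiOmega, vn_pow_eq h I]

/-- Corollary 3.9: for a decomposable ring `R = R₁ × ⋯ × R_{n+1}` with
`n ≥ 2`, the following are equivalent: `R` is von Neumann regular; every
proper ideal of `R` is `n`-almost `n`-absorbing primary; every proper ideal of
`R` is `ω`-`n`-absorbing primary; every proper ideal of `R` is `n`-almost
`n`-absorbing. -/
theorem stmt_17 (n : ℕ) (hn : 2 ≤ n) (R : Fin (n + 1) → Type*)
    [∀ i, CommRing (R i)] [∀ i, Nontrivial (R i)] :
    ((IsVNRegular (Π i, R i) ↔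
        ∀ I : Ideal (Π i, R i), I ≠ ⊤ →
          IsPhiNAbsorbingPrimary (fun J => J ^ n) n I) ∧
      (IsVNRegular (Π i, R i) ↔
        ∀ I : Ideal (Π i, R i), I ≠ ⊤ →
          IsPhiNAbsorbingPrimary phiOmega n I) ∧
      (IsVNRegular (Π i, R i) ↔
        ∀ I : Ideal (Π i, R i), I ≠ ⊤ →
          IsPhiNAbsorbing (fun J => J ^ n) n I)) := by
  refine ⟨⟨?_, ?_⟩, ⟨?_, ?_⟩, ⟨?_, ?_⟩⟩
  · -- VN → n-almost n-absorbing primary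
    intro hVN I hI
    refine ⟨hI, fun a h1 h2 => absurd ?_ h2⟩
    show (∏ i, a i) ∈ I ^ n
    rw [vn_pow_n hVN I hn]; exact h1
  · -- n-almost n-absorbing primary → VN
    intro h
    refine vn_of_components fun k a => ?_
    obtain ⟨-, H⟩ := h (Ideal.span {vv k a}) (span_ne_top k a hn)
    by_cases hsq : (∏ j, cc k a j) ∈ Ideal.span {vv k a} ^ 2
    · exact sq_case k a hsq
    · have hn' : (∏ j, cc k a j) ∉ Ideal.span {vv k a} ^ n :=
        fun hc => hsq (Ideal.pow_le_pow_right hn hc)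
      exact hard_core k a hn (H (cc k a) (prodcc_mem k a) hn')
  · -- VN → ω-n-absorbing primary
    intro hVN I hI
    refine ⟨hI, fun a h1 h2 => absurd ?_ h2⟩
    show (∏ i, a i) ∈ phiOmega I
    rw [vn_phiOmega hVN I]; exact h1
  · -- ω-n-absorbing primary → VN
    intro h
    refine vn_of_components fun k a => ?_
    obtain ⟨-, H⟩ := h (Ideal.span {vv k a}) (span_ne_top k a hn)
    by_cases hsq : (∏ j, cc k a j) ∈ Ideal.span {vv k a} ^ 2
    · exact sq_case k a hsq
    · have hn' : (∏ j, cc k a j) ∉ phiOmega (Ideal.span {vv k a}) :=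
        fun hc => hsq (iInf_le (fun m => Ideal.span {vv k a} ^ (m + 1)) 1 hc)
      exact hard_core k a hn (H (cc k a) (prodcc_mem k a) hn')
  · -- VN → n-almost n-absorbing
    intro hVN I hI
    refine ⟨hI, fun a h1 h2 => absurd ?_ h2⟩
    show (∏ i, a i) ∈ I ^ n
    rw [vn_pow_n hVN I hn]; exact h1
  · -- n-almost n-absorbing → VN
    intro h
    refine vn_of_components fun k a => ?_
    obtain ⟨-, H⟩ := h (Ideal.span {vv k a}) (span_ne_top k a hn)
    by_cases hsq : (∏ j, cc k a j) ∈ Ideal.span {vv k a} ^ 2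
    · exact sq_case k a hsq
    · have hn' : (∏ j, cc k a j) ∉ Ideal.span {vv k a} ^ n :=
        fun hc => hsq (Ideal.pow_le_pow_right hn hc)
      obtain ⟨i, hi⟩ := H (cc k a) (prodcc_mem k a) hn'
      by_cases hi0 : i = 0
      · exact radical_case_zero k a (Ideal.le_radical (hi0 ▸ hi))
      · exfalso
        have h0 := mem_comp_eq_zero k a hi (swap_ne_k k hi0)
        rw [prod_erase_comp k a i hi0] at h0
        exact one_ne_zero h0
end

section
/- Let R be a Prüfer domain and I a proper ideal of R. Then I is an n-absorbing primary ideal of R if and only if the extension I[X] (the ideal of the polynomial ring R[X] consisting of polynomials all of whose coefficients lie in I, i.e. the extension of I along the coefficient embedding R → R[X]) is an n-absorbing primary ideal of R[X]. Likewise, I is a weakly n-absorbing primary ideal of R if and only if I[X] is a weakly n-absorbing primary ideal of R[X]. -/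
set_option linter.unusedSectionVars false

open scoped nonZeroDivisors

section ContentAux

open Polynomial Finset

variable {R : Type*} [CommRing R] [IsDomain R]

/-- The content ideal of a polynomial: the ideal generated by its coefficients. -/
noncomputable def cI (f : R[X]) : Ideal R := Ideal.span (Set.range f.coeff)

lemma cI_le_iff {f : R[X]} {J : Ideal R} : cI f ≤ J ↔ ∀ k, f.coeff k ∈ J := by
  rw [cI, Ideal.span_le]
  constructor
  · intro h k; exact h ⟨k, rfl⟩
  · rintro h x ⟨k, rfl⟩; exact h k

lemma coeff_mem_cI (f : R[X]) (k : ℕ) : f.coeff k ∈ cI f :=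
  Ideal.subset_span ⟨k, rfl⟩

lemma mem_map_C_iff_cI {I : Ideal R} {f : R[X]} :
    f ∈ I.map (C : R →+* R[X]) ↔ cI f ≤ I := by
  rw [Ideal.mem_map_C_iff, cI_le_iff]

lemma cI_fg (f : R[X]) : (cI f).FG := by
  classical
  refine ⟨(Finset.range (f.natDegree + 1)).image f.coeff, le_antisymm ?_ ?_⟩
  · rw [Ideal.span_le]
    intro x hx
    simp only [coe_image, Set.mem_image] at hx
    obtain ⟨k, _, rfl⟩ := hx
    exact coeff_mem_cI f k
  · rw [cI, Ideal.span_le]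
    rintro x ⟨k, rfl⟩
    by_cases h : k ≤ f.natDegree
    · exact Ideal.subset_span (by
        simp only [coe_image, Set.mem_image]
        exact ⟨k, by simpa using Nat.lt_succ_of_le h, rfl⟩)
    · rw [f.coeff_eq_zero_of_natDegree_lt (lt_of_not_ge h)]
      exact zero_mem _

lemma cI_ne_bot {f : R[X]} (hf : f ≠ 0) : cI f ≠ ⊥ := by
  intro h
  apply hf
  ext k
  have := coeff_mem_cI f k
  rw [h, Ideal.mem_bot] at this
  simp [this]

lemma cI_one : cI (1 : R[X]) = ⊤ := by
  rw [Ideal.eq_top_iff_one]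
  simpa using coeff_mem_cI (1 : R[X]) 0

lemma cI_mul_le (f g : R[X]) : cI (f * g) ≤ cI f * cI g := by
  rw [cI_le_iff]
  intro k
  rw [coeff_mul]
  exact Ideal.sum_mem _ fun p _ => Ideal.mul_mem_mul (coeff_mem_cI f p.1) (coeff_mem_cI g p.2)

end ContentAux



/-- A Prüfer domain: every nonzero finitely generated ideal is invertible. -/
def IsPruferDomain (R : Type*) [CommRing R] [IsDomain R] : Prop :=
  ∀ I : Ideal R, I ≠ ⊥ → I.FG →
    IsUnit (I : FractionalIdeal R⁰ (FractionRing R))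

section LocAux

open Polynomial Finset

variable {R : Type*} [CommRing R] [IsDomain R]

lemma mem_of_forall_loc {I : Ideal R} {x : R}
    (h : ∀ m : Ideal R, m.IsMaximal → ∃ s, s ∉ m ∧ s * x ∈ I) : x ∈ I := by
  by_contra hx
  have hT : I.colon (Ideal.span {x}) ≠ ⊤ := by
    intro ht
    have h1 : (1 : R) ∈ I.colon (Ideal.span {x}) := ht ▸ Submodule.mem_top
    rw [Ideal.mem_colon_span_singleton, one_mul] at h1
    exact hx h1
  obtain ⟨m, hm, hle⟩ := Ideal.exists_le_maximal _ hT
  obtain ⟨s, hs, hsx⟩ := h m hm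
  exact hs (hle (Ideal.mem_colon_span_singleton.2 hsx))

lemma exists_mul_eq_span (hR : IsPruferDomain R) {J : Ideal R} (h0 : J ≠ ⊥) (hfg : J.FG) :
    ∃ (J' : Ideal R) (d : R), d ≠ 0 ∧ J * J' = Ideal.span {d} := by
  obtain ⟨u, hu⟩ := hR J h0 hfg
  set K := FractionRing R
  obtain ⟨d, J', hd, hT⟩ :=
    FractionalIdeal.exists_eq_spanSingleton_mul ((↑u⁻¹ : FractionalIdeal R⁰ K))
  have hdK : algebraMap R K d ≠ 0 := fun h =>
    hd ((injective_iff_map_eq_zero _).1 (IsFractionRing.injective R K) d h)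
  have h1 : (J : FractionalIdeal R⁰ K) * ↑u⁻¹ = 1 := by
    rw [← hu]; exact u.mul_inv
  rw [hT] at h1
  have h2 : ((J * J' : Ideal R) : FractionalIdeal R⁰ K)
      = ((Ideal.span {d} : Ideal R) : FractionalIdeal R⁰ K) := by
    rw [FractionalIdeal.coeIdeal_mul, FractionalIdeal.coeIdeal_span_singleton]
    have := congrArg
      (fun x => FractionalIdeal.spanSingleton R⁰ (algebraMap R K d) * x) h1
    simp only [mul_one] at this
    calc (J : FractionalIdeal R⁰ K) * (J' : FractionalIdeal R⁰ K)
        = (FractionalIdeal.spanSingleton R⁰ (algebraMap R K d) *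
            FractionalIdeal.spanSingleton R⁰ (algebraMap R K d)⁻¹) *
            ((J : FractionalIdeal R⁰ K) * (J' : FractionalIdeal R⁰ K)) := by
          rw [FractionalIdeal.spanSingleton_mul_spanSingleton,
            mul_inv_cancel₀ hdK, FractionalIdeal.spanSingleton_one, one_mul]
      _ = FractionalIdeal.spanSingleton R⁰ (algebraMap R K d) *
            ((J : FractionalIdeal R⁰ K) *
              (FractionalIdeal.spanSingleton R⁰ (algebraMap R K d)⁻¹ *
                (J' : FractionalIdeal R⁰ K))) := by ring
      _ = FractionalIdeal.spanSingleton R⁰ (algebraMap R K d) := by rw [this]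
  exact ⟨J', d, hd, FractionalIdeal.coeIdeal_injective h2⟩

/-- The "bad set": elements that fail to be local generators at `m`. -/
def badD (J' : Ideal R) (d : R) (m : Ideal R) : Ideal R where
  carrier := {x | ∀ b ∈ J', ∃ t ∈ m, x * b = d * t}
  zero_mem' := fun b _ => ⟨0, m.zero_mem, by ring⟩
  add_mem' := by
    rintro x y hx hy b hb
    obtain ⟨t1, ht1, e1⟩ := hx b hb
    obtain ⟨t2, ht2, e2⟩ := hy b hb
    exact ⟨t1 + t2, m.add_mem ht1 ht2, by rw [add_mul, e1, e2, mul_add]⟩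
  smul_mem' := by
    rintro r x hx b hb
    obtain ⟨t, ht, e⟩ := hx b hb
    exact ⟨r * t, m.mul_mem_left r ht, by rw [smul_eq_mul, mul_assoc, e]; ring⟩

lemma zero_mem_badD (J' : Ideal R) (d : R) (m : Ideal R) : (0 : R) ∈ badD J' d m :=
  (badD J' d m).zero_mem

lemma not_le_badD {J J' : Ideal R} {d : R} (hd : d ≠ 0)
    (hJJ' : J * J' = Ideal.span {d}) {m : Ideal R} (hm : m ≠ ⊤) : ¬ J ≤ badD J' d m := by
  intro hle
  have key : ∀ z ∈ J * J', ∃ t ∈ m, z = d * t := by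
    intro z hz
    refine Submodule.mul_induction_on hz ?_ ?_
    · intro x hx y hy
      obtain ⟨t, ht, e⟩ := hle hx y hy
      exact ⟨t, ht, e⟩
    · rintro x y ⟨t1, ht1, e1⟩ ⟨t2, ht2, e2⟩
      exact ⟨t1 + t2, m.add_mem ht1 ht2, by rw [e1, e2, mul_add]⟩
  obtain ⟨t, ht, e⟩ := key d (hJJ' ▸ Ideal.mem_span_singleton_self d)
  have ht1 : t = 1 := mul_left_cancel₀ hd (by rw [← e, mul_one])
  exact hm ((Ideal.eq_top_iff_one m).2 (ht1 ▸ ht))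

lemma locgen {J J' : Ideal R} {d : R} (hd : d ≠ 0)
    (hJJ' : J * J' = Ideal.span {d}) {m : Ideal R} {a : R}
    (haJ : a ∈ J) (haD : a ∉ badD J' d m) :
    ∃ s ∉ m, ∀ x ∈ J, s * x ∈ Ideal.span {a} := by
  have : ¬ ∀ b ∈ J', ∃ t ∈ m, a * b = d * t := haD
  push_neg at this
  obtain ⟨b, hb, hbt⟩ := this
  have hab : a * b ∈ Ideal.span {d} := hJJ' ▸ Ideal.mul_mem_mul haJ hb
  obtain ⟨t0, ht0e⟩ := Ideal.mem_span_singleton'.1 hab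
  have ht0m : t0 ∉ m := fun h => hbt t0 h (by rw [← ht0e]; ring)
  refine ⟨t0, ht0m, fun x hx => ?_⟩
  have hxb : x * b ∈ Ideal.span {d} := hJJ' ▸ Ideal.mul_mem_mul hx hb
  obtain ⟨w, hwe⟩ := Ideal.mem_span_singleton'.1 hxb
  refine Ideal.mem_span_singleton'.2 ⟨w, ?_⟩
  refine mul_left_cancel₀ hd ?_
  calc d * (w * a) = (w * d) * a := by ring
    _ = (x * b) * a := by rw [hwe]
    _ = x * (a * b) := by ring
    _ = x * (t0 * d) := by rw [ht0e]
    _ = d * (t0 * x) := by ring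

end LocAux

section GaussAux

open Polynomial Finset

variable {R : Type*} [CommRing R] [IsDomain R]

lemma one_not_mem {m : Ideal R} (hm : m ≠ ⊤) : (1 : R) ∉ m :=
  fun h => hm ((Ideal.eq_top_iff_one m).2 h)

lemma loc_dvd (hR : IsPruferDomain R) {m : Ideal R} (hm : m ≠ ⊤) (x y : R) :
    ∃ s ∉ m, (∃ t, s * y = t * x) ∨ (∃ t, s * x = t * y) := by
  rcases eq_or_ne x 0 with rfl | hx
  · exact ⟨1, one_not_mem hm, Or.inr ⟨0, by ring⟩⟩
  classical
  set J := Ideal.span ({x, y} : Set R) with hJdef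
  have hfg : J.FG := ⟨{x, y}, by simp [hJdef]⟩
  have hxJ : x ∈ J := Ideal.subset_span (by simp)
  have hyJ : y ∈ J := Ideal.subset_span (by simp)
  have h0 : J ≠ ⊥ := fun h => hx (Ideal.mem_bot.1 (h ▸ hxJ))
  obtain ⟨J', d, hd, hJJ'⟩ := exists_mul_eq_span hR h0 hfg
  by_cases hxD : x ∈ badD J' d m
  · have hyD : y ∉ badD J' d m := by
      intro hyD
      refine not_le_badD hd hJJ' hm ?_
      rw [hJdef, Ideal.span_le]
      rintro z (rfl | rfl) <;> assumption
    obtain ⟨s, hs, hgen⟩ := locgen hd hJJ' hyJ hyD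
    obtain ⟨t, ht⟩ := Ideal.mem_span_singleton'.1 (hgen x hxJ)
    exact ⟨s, hs, Or.inr ⟨t, ht.symm⟩⟩
  · obtain ⟨s, hs, hgen⟩ := locgen hd hJJ' hxJ hxD
    obtain ⟨t, ht⟩ := Ideal.mem_span_singleton'.1 (hgen y hyJ)
    exact ⟨s, hs, Or.inl ⟨t, ht.symm⟩⟩

lemma exists_dominant (hR : IsPruferDomain R) {m : Ideal R} (hm : m.IsPrime)
    (a : ℕ → R) (d : ℕ) :
    ∃ s ∉ m, ∃ i ≤ d, ∀ j ≤ d, ∃ t, s * a j = t * a i := by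
  induction d with
  | zero =>
    refine ⟨1, one_not_mem hm.ne_top, 0, le_refl 0, fun j hj => ?_⟩
    rw [Nat.le_zero.1 hj]
    exact ⟨1, by ring⟩
  | succ d ih =>
    obtain ⟨s, hs, i, hi, hdom⟩ := ih
    obtain ⟨s2, hs2, hcase⟩ := loc_dvd hR hm.ne_top (a i) (a (d + 1))
    have hss2 : s * s2 ∉ m := fun h => ((hm.mem_or_mem h).elim hs hs2)
    rcases hcase with ⟨t, ht⟩ | ⟨t, ht⟩
    · -- s2 * a (d+1) = t * a i : keep i
      refine ⟨s * s2, hss2, i, le_trans hi (Nat.le_succ d), fun j hj => ?_⟩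
      by_cases hj' : j ≤ d
      · obtain ⟨tj, htj⟩ := hdom j hj'
        exact ⟨s2 * tj, by rw [show s * s2 * a j = s2 * (s * a j) by ring, htj]; ring⟩
      · have hje : j = d + 1 := le_antisymm hj (not_le.1 hj')
        subst hje
        exact ⟨s * t, by rw [mul_assoc, ht]; ring⟩
    · -- s2 * a i = t * a (d+1) : switch to d+1
      refine ⟨s * s2, hss2, d + 1, le_refl _, fun j hj => ?_⟩
      by_cases hj' : j ≤ d
      · obtain ⟨tj, htj⟩ := hdom j hj'
        refine ⟨tj * t, ?_⟩
        calc s * s2 * a j = s2 * (s * a j) := by ring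
          _ = s2 * (tj * a i) := by rw [htj]
          _ = tj * (s2 * a i) := by ring
          _ = tj * (t * a (d + 1)) := by rw [ht]
          _ = tj * t * a (d + 1) := by ring
      · have hje : j = d + 1 := le_antisymm hj (not_le.1 hj')
        subst hje
        exact ⟨s * s2, rfl⟩

end GaussAux
section GaussMain

open Polynomial Finset

variable {R : Type*} [CommRing R] [IsDomain R]

lemma mccoy {m : Ideal R} (hm : m.IsPrime) {p q : R[X]}
    (hp : ∃ k, p.coeff k ∉ m) (hq : ∃ k, q.coeff k ∉ m) :
    ∃ k, (p * q).coeff k ∉ m := by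
  have key : ∀ r : R[X], (∃ k, r.coeff k ∉ m) ↔ r.map (Ideal.Quotient.mk m) ≠ 0 := by
    intro r
    rw [Ne, Polynomial.ext_iff]
    push_neg
    constructor
    · rintro ⟨k, hk⟩
      exact ⟨k, by simpa [Polynomial.coeff_map, Ideal.Quotient.eq_zero_iff_mem] using hk⟩
    · rintro ⟨k, hk⟩
      exact ⟨k, by simpa [Polynomial.coeff_map, Ideal.Quotient.eq_zero_iff_mem] using hk⟩
  rw [key] at hp hq ⊢
  rw [Polynomial.map_mul]
  exact mul_ne_zero hp hq

lemma scaled_factor (hR : IsPruferDomain R) {m : Ideal R} (hm : m.IsPrime)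
    {f : R[X]} (hf : f ≠ 0) :
    ∃ (s c : R) (f' : R[X]), s ∉ m ∧ c ∈ cI f ∧ (∃ k, f'.coeff k ∉ m) ∧
      C s * f = C c * f' ∧ ∀ x ∈ cI f, s * x ∈ Ideal.span {c} := by
  classical
  obtain ⟨s, hs, i, hi, hdom⟩ := exists_dominant hR hm f.coeff f.natDegree
  have hs0 : s ≠ 0 := fun h => hs (h ▸ m.zero_mem)
  have hai : f.coeff i ≠ 0 := by
    intro h
    obtain ⟨t, ht⟩ := hdom f.natDegree (le_refl _)
    rw [h, mul_zero] at ht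
    rcases mul_eq_zero.1 ht with h' | h'
    · exact hs0 h'
    · exact hf (Polynomial.leadingCoeff_eq_zero.1 h')
  have hdom' : ∀ j, ∃ t, s * f.coeff j = t * f.coeff i := by
    intro j
    by_cases hj : j ≤ f.natDegree
    · exact hdom j hj
    · exact ⟨0, by rw [f.coeff_eq_zero_of_natDegree_lt (lt_of_not_ge hj), mul_zero, zero_mul]⟩
  choose tf htf using hdom'
  set f' : R[X] := ∑ j ∈ Finset.range (f.natDegree + 1), C (tf j) * X ^ j with hf'def
  have hf'coeff : ∀ k, f'.coeff k = if k ≤ f.natDegree then tf k else 0 := by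
    intro k
    rw [hf'def, Polynomial.finset_sum_coeff]
    simp only [Polynomial.coeff_C_mul, Polynomial.coeff_X_pow, mul_ite, mul_one, mul_zero]
    rw [Finset.sum_ite_eq]
    simp [Nat.lt_succ_iff]
  have hkey : C s * f = C (f.coeff i) * f' := by
    ext k
    simp only [Polynomial.coeff_C_mul]
    rw [hf'coeff k]
    by_cases hk : k ≤ f.natDegree
    · rw [if_pos hk, htf k]; ring
    · rw [if_neg hk, f.coeff_eq_zero_of_natDegree_lt (lt_of_not_ge hk), mul_zero, mul_zero]
  have hf'unit : ∃ k, f'.coeff k ∉ m := by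
    refine ⟨i, ?_⟩
    rw [hf'coeff i, if_pos hi]
    have hts : tf i = s := by
      have := htf i
      exact (mul_right_cancel₀ hai this.symm)
    rw [hts]
    exact hs
  have hloc : ∀ x ∈ cI f, s * x ∈ Ideal.span {f.coeff i} := by
    intro x hx
    have hsub : cI f ≤ (Ideal.span {f.coeff i}).colon (Ideal.span {s}) := by
      rw [cI, Ideal.span_le]
      rintro y ⟨j, rfl⟩
      rw [SetLike.mem_coe, Ideal.mem_colon_span_singleton]
      exact Ideal.mem_span_singleton'.2 ⟨tf j, by linear_combination -htf j⟩
    have := hsub hx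
    rw [Ideal.mem_colon_span_singleton] at this
    rwa [mul_comm]
  exact ⟨s, f.coeff i, f', hs, coeff_mem_cI f i, hf'unit, hkey, hloc⟩

lemma gauss_loc (hR : IsPruferDomain R) {m : Ideal R} (hm : m.IsPrime)
    {f g : R[X]} (hf : f ≠ 0) (hg : g ≠ 0) {z : R} (hz : z ∈ cI f * cI g) :
    ∃ s, s ∉ m ∧ s * z ∈ cI (f * g) := by
  obtain ⟨s, c, f', hs, hc, hf'k, hfeq, hfloc⟩ := scaled_factor hR hm hf
  obtain ⟨s', c', g', hs', hc', hg'k, hgeq, hgloc⟩ := scaled_factor hR hm hg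
  obtain ⟨k, hk⟩ := mccoy hm hf'k hg'k
  set u := (f' * g').coeff k with hu
  have hmain : s * s' * ((f * g).coeff k) = c * c' * u := by
    have h2 : C (s * s') * (f * g) = C (c * c') * (f' * g') := by
      rw [C_mul, C_mul]
      calc C s * C s' * (f * g) = (C s * f) * (C s' * g) := by ring
        _ = (C c * f') * (C c' * g') := by rw [hfeq, hgeq]
        _ = C c * C c' * (f' * g') := by ring
    have h3 := congrArg (fun p => p.coeff k) h2
    simpa only [Polynomial.coeff_C_mul] using h3
  have humem : u * (c * c') ∈ cI (f * g) := by
    rw [show u * (c * c') = s * s' * ((f * g).coeff k) from by rw [hmain]; ring]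
    exact Ideal.mul_mem_left _ _ (coeff_mem_cI _ k)
  have hspan : s * s' * z ∈ Ideal.span {c * c'} := by
    refine Submodule.mul_induction_on hz ?_ ?_
    · intro x hx y hy
      obtain ⟨t1, ht1⟩ := Ideal.mem_span_singleton'.1 (hfloc x hx)
      obtain ⟨t2, ht2⟩ := Ideal.mem_span_singleton'.1 (hgloc y hy)
      exact Ideal.mem_span_singleton'.2
        ⟨t1 * t2, by linear_combination t2 * c' * ht1 + s * x * ht2⟩
    · intro x y hx hy
      rw [mul_add]
      exact Ideal.add_mem _ hx hy
  obtain ⟨w, hw⟩ := Ideal.mem_span_singleton'.1 hspan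
  refine ⟨u * (s * s'), fun h => ?_, ?_⟩
  · rcases hm.mem_or_mem h with h | h
    · exact hk h
    · rcases hm.mem_or_mem h with h | h
      · exact hs h
      · exact hs' h
  · have heq : (u * (s * s')) * z = w * (u * (c * c')) := by linear_combination (-u) * hw
    rw [heq]
    exact Ideal.mul_mem_left _ w humem

lemma cI_zero : cI (0 : R[X]) = ⊥ :=
  Ideal.span_eq_bot.2 (by rintro x ⟨k, rfl⟩; simp)

lemma cI_mul (hR : IsPruferDomain R) (f g : R[X]) : cI (f * g) = cI f * cI g := by
  rcases eq_or_ne f 0 with rfl | hf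
  · simp [cI_zero]
  rcases eq_or_ne g 0 with rfl | hg
  · simp [cI_zero]
  refine le_antisymm (cI_mul_le f g) ?_
  intro z hz
  exact mem_of_forall_loc fun m hm => gauss_loc hR hm.isPrime hf hg hz

lemma cI_prod (hR : IsPruferDomain R) {ι : Type*} (s : Finset ι) (f : ι → R[X]) :
    cI (∏ i ∈ s, f i) = ∏ i ∈ s, cI (f i) := by
  classical
  induction s using Finset.induction with
  | empty => simpa using cI_one
  | insert _ _ hj ih => rw [Finset.prod_insert hj, Finset.prod_insert hj, cI_mul hR, ih]

end GaussMain
section StronglyCore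

open Polynomial Finset

variable {R : Type*} [CommRing R] [IsDomain R]

lemma locle_prod {ι : Type*} (s : Finset ι) (A : ι → Ideal R) (B : ι → R)
    {m : Ideal R} (hm : m.IsPrime)
    (h : ∀ i ∈ s, ∀ y ∈ A i, ∃ t, t ∉ m ∧ t * y ∈ Ideal.span {B i}) :
    ∀ x ∈ ∏ i ∈ s, A i, ∃ t, t ∉ m ∧ t * x ∈ Ideal.span {∏ i ∈ s, B i} := by
  classical
  induction s using Finset.induction with
  | empty =>
    intro x _
    refine ⟨1, one_not_mem hm.ne_top, ?_⟩
    rw [Finset.prod_empty, Ideal.span_singleton_one]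
    exact Submodule.mem_top
  | @insert j s hj ih =>
    intro x hx
    rw [Finset.prod_insert hj] at hx
    refine Submodule.mul_induction_on hx ?_ ?_
    · intro y hy z hz
      obtain ⟨t1, ht1, ht1'⟩ := h j (Finset.mem_insert_self j s) y hy
      obtain ⟨t2, ht2, ht2'⟩ := ih (fun i hi => h i (Finset.mem_insert_of_mem hi)) z hz
      refine ⟨t1 * t2, fun hmem => (hm.mem_or_mem hmem).elim ht1 ht2, ?_⟩
      rw [Finset.prod_insert hj, ← Ideal.span_singleton_mul_span_singleton]
      have : t1 * t2 * (y * z) = (t1 * y) * (t2 * z) := by ring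
      rw [this]
      exact Ideal.mul_mem_mul ht1' ht2'
    · rintro y z ⟨t1, ht1, ht1'⟩ ⟨t2, ht2, ht2'⟩
      refine ⟨t1 * t2, fun hmem => (hm.mem_or_mem hmem).elim ht1 ht2, ?_⟩
      rw [mul_add]
      refine Ideal.add_mem _ ?_ ?_
      · rw [show t1 * t2 * y = t2 * (t1 * y) by ring]
        exact Ideal.mul_mem_left _ _ ht1'
      · rw [show t1 * t2 * z = t1 * (t2 * z) by ring]
        exact Ideal.mul_mem_left _ _ ht2'

lemma prod_ideal_le_of_mem {ι : Type*} {s : Finset ι} {J : ι → Ideal R} {j : ι}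
    (hj : j ∈ s) : (∏ i ∈ s, J i) ≤ J j := by
  classical
  rw [← Finset.prod_erase_mul s J hj]
  exact Ideal.mul_le_right

lemma mem_prime_of_prod_mem {ι : Type*} {s : Finset ι} {x : ι → R} {P : Ideal R}
    (hP : P.IsPrime) (h : (∏ i ∈ s, x i) ∈ P) : ∃ i ∈ s, x i ∈ P := by
  classical
  induction s using Finset.induction with
  | empty => exact absurd ((Ideal.eq_top_iff_one P).2 (by simpa using h)) hP.ne_top
  | @insert j s hj ih =>
    rw [Finset.prod_insert hj] at h
    rcases hP.mem_or_mem h with h | h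
    · exact ⟨j, Finset.mem_insert_self j s, h⟩
    · obtain ⟨i, hi, hxi⟩ := ih h
      exact ⟨i, Finset.mem_insert_of_mem hi, hxi⟩

lemma strongly_core (hR : IsPruferDomain R) {n : ℕ} (hn : 0 < n) {I : Ideal R}
    (J : Fin (n + 1) → Ideal R) (hfg : ∀ k, (J k).FG) (h0 : ∀ k, J k ≠ ⊥)
    (hprod : (∏ k, J k) ≤ I)
    (helem : ∀ a : Fin (n + 1) → R, (∀ k, a k ∈ J k) → (∀ k, a k ≠ 0) →
      (∏ k, a k) ∈ I →
      ((∏ i : Fin n, a i.castSucc) ∈ I ∨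
        ∃ i : Fin n, (∏ j ∈ Finset.univ.erase i.castSucc, a j) ∈ I.radical)) :
    (∏ i : Fin n, J i.castSucc) ≤ I ∨
      ∃ i : Fin n, (∏ j ∈ Finset.univ.erase i.castSucc, J j) ≤ I.radical := by
  classical
  by_contra hcon
  push_neg at hcon
  obtain ⟨hleft, hright⟩ := hcon
  -- for each i, a prime over I missing all J j, j ≠ i.castSucc
  have hP : ∀ i : Fin n, ∃ P : Ideal R, P.IsPrime ∧ I ≤ P ∧
      ∀ j, j ≠ i.castSucc → ¬ J j ≤ P := by
    intro i
    have hri := hright i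
    rw [Ideal.radical_eq_sInf] at hri
    have : ∃ P ∈ {K : Ideal R | I ≤ K ∧ K.IsPrime},
        ¬ (∏ j ∈ Finset.univ.erase i.castSucc, J j) ≤ P := by
      by_contra h
      push_neg at h
      exact hri (le_sInf h)
    obtain ⟨P, ⟨hIP, hPprime⟩, hnle⟩ := this
    refine ⟨P, hPprime, hIP, fun j hj hle => hnle ?_⟩
    exact le_trans (prod_ideal_le_of_mem (Finset.mem_erase.2 ⟨hj, Finset.mem_univ j⟩)) hle
  choose P hPprime hIP hPnle using hP
  apply hleft
  intro x hx
  apply mem_of_forall_loc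
  intro m hm
  -- local generators of J k.castSucc at m, avoiding the primes P i for i ≠ k
  have hgen : ∀ k : Fin n, ∃ a, a ∈ J k.castSucc ∧ a ≠ 0 ∧
      (∀ i : Fin n, i ≠ k → a ∉ P i) ∧
      ∀ y ∈ J k.castSucc, ∃ t, t ∉ m ∧ t * y ∈ Ideal.span {a} := by
    intro k
    obtain ⟨J', d, hd, hJJ'⟩ := exists_mul_eq_span hR (h0 k.castSucc) (hfg k.castSucc)
    set f : Fin n → Ideal R := fun i => if i = k then badD J' d m else P i with hfdef
    have hnsub : ¬ ((J k.castSucc : Set R) ⊆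
        ⋃ i ∈ ((Finset.univ : Finset (Fin n)) : Set (Fin n)), (f i : Set R)) := by
      rw [Ideal.subset_union_prime k k (fun i _ hik _ => by
        simp only [hfdef, if_neg hik]; exact hPprime i)]
      rintro ⟨i, _, hle⟩
      by_cases hik : i = k
      · subst hik
        simp only [hfdef, if_pos rfl] at hle
        exact not_le_badD hd hJJ' hm.ne_top hle
      · simp only [hfdef, if_neg hik] at hle
        exact hPnle i k.castSucc (by
          simp only [ne_eq, Fin.castSucc_inj]
          exact fun h => hik (h.symm ▸ rfl)) hle
    obtain ⟨a, haJ, haU⟩ := Set.not_subset.1 hnsub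
    have haD : a ∉ badD J' d m := by
      intro h
      apply haU
      refine Set.mem_biUnion (Finset.mem_coe.2 (Finset.mem_univ k)) ?_
      simp only [hfdef, if_pos rfl]
      exact h
    have haP : ∀ i : Fin n, i ≠ k → a ∉ P i := by
      intro i hik h
      apply haU
      refine Set.mem_biUnion (Finset.mem_coe.2 (Finset.mem_univ i)) ?_
      simp only [hfdef, if_neg hik]
      exact h
    have ha0 : a ≠ 0 := fun h => haD (h ▸ zero_mem_badD J' d m)
    obtain ⟨s, hs, hgen'⟩ := locgen hd hJJ' haJ haD
    exact ⟨a, haJ, ha0, haP, fun y hy => ⟨s, hs, hgen' y hy⟩⟩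
  choose a haJ ha0 haP hloc using hgen
  -- element avoiding all the primes, in the last ideal
  have hcstar : ∃ c, c ∈ J (Fin.last n) ∧ ∀ i : Fin n, c ∉ P i := by
    have hnsub : ¬ ((J (Fin.last n) : Set R) ⊆
        ⋃ i ∈ ((Finset.univ : Finset (Fin n)) : Set (Fin n)), (P i : Set R)) := by
      rw [Ideal.subset_union_prime (⟨0, hn⟩ : Fin n) ⟨0, hn⟩ (fun i _ _ _ => hPprime i)]
      rintro ⟨i, _, hle⟩
      exact hPnle i (Fin.last n) (Fin.castSucc_lt_last i).ne' hle
    obtain ⟨c, hcJ, hcU⟩ := Set.not_subset.1 hnsub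
    exact ⟨c, hcJ, fun i h =>
      hcU (Set.mem_biUnion (Finset.mem_coe.2 (Finset.mem_univ i)) h)⟩
  obtain ⟨c, hcJ, hcP⟩ := hcstar
  set b : Fin (n + 1) → R := Fin.lastCases c a with hbdef
  have hbcast : ∀ i : Fin n, b i.castSucc = a i := fun i => by
    simp only [hbdef, Fin.lastCases_castSucc]
  have hblast : b (Fin.last n) = c := by simp only [hbdef, Fin.lastCases_last]
  have hbJ : ∀ k, b k ∈ J k := by
    intro k
    induction k using Fin.lastCases with
    | last => rw [hblast]; exact hcJ
    | cast i => rw [hbcast]; exact haJ i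
  have hb0 : ∀ k, b k ≠ 0 := by
    intro k
    induction k using Fin.lastCases with
    | last => rw [hblast]; exact fun h => hcP ⟨0, hn⟩ (h ▸ (P ⟨0, hn⟩).zero_mem)
    | cast i => rw [hbcast]; exact ha0 i
  have hbI : (∏ k, b k) ∈ I := hprod (Ideal.prod_mem_prod fun k _ => hbJ k)
  rcases helem b hbJ hb0 hbI with hc1 | ⟨i, hc2⟩
  · -- local generation finishes membership at m
    obtain ⟨t, ht, ht'⟩ := locle_prod Finset.univ (fun i : Fin n => J i.castSucc)
      (fun i : Fin n => a i) hm.isPrime (fun i _ y hy => hloc i y hy) x hx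
    refine ⟨t, ht, ?_⟩
    have hle : Ideal.span {∏ i : Fin n, a i} ≤ I := by
      rw [Ideal.span_le, Set.singleton_subset_iff]
      have : (∏ i : Fin n, a i) = ∏ i : Fin n, b i.castSucc := by
        refine Finset.prod_congr rfl fun i _ => (hbcast i).symm
      rw [this]
      exact hc1
    exact hle ht'
  · -- contradiction with the prime P i
    exfalso
    have hrad : (∏ j ∈ Finset.univ.erase i.castSucc, b j) ∈ P i := by
      have : I.radical ≤ P i := by
        rw [Ideal.radical_eq_sInf]
        exact sInf_le ⟨hIP i, hPprime i⟩
      exact this hc2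
    obtain ⟨j, hj, hbPj⟩ := mem_prime_of_prod_mem (hPprime i) hrad
    rw [Finset.mem_erase] at hj
    induction j using Fin.lastCases with
    | last => exact hcP i (hblast ▸ hbPj)
    | cast j' =>
      refine haP j' i (fun h => hj.1 ?_) (hbcast j' ▸ hbPj)
      rw [h]
  
end StronglyCore
/-- A proper ideal `I` is `n`-absorbing primary. -/
def IsNAbsorbingPrimary {S : Type*} [CommRing S] (n : ℕ) (I : Ideal S) : Prop :=
  I ≠ ⊤ ∧ ∀ a : Fin (n + 1) → S,
    (∏ i, a i) ∈ I →
      ((∏ i : Fin n, a i.castSucc) ∈ I ∨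
        ∃ i : Fin n, (∏ j ∈ Finset.univ.erase i.castSucc, a j) ∈ I.radical)

/-- A proper ideal `I` is weakly `n`-absorbing primary. -/
def IsWeaklyNAbsorbingPrimary {S : Type*} [CommRing S] (n : ℕ) (I : Ideal S) : Prop :=
  I ≠ ⊤ ∧ ∀ a : Fin (n + 1) → S,
    (∏ i, a i) ≠ 0 → (∏ i, a i) ∈ I →
      ((∏ i : Fin n, a i.castSucc) ∈ I ∨
        ∃ i : Fin n, (∏ j ∈ Finset.univ.erase i.castSucc, a j) ∈ I.radical)

section MainAux

open Polynomial Finset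

variable {R : Type*} [CommRing R] [IsDomain R]

lemma map_C_ne_top {I : Ideal R} (hI : I ≠ ⊤) : I.map (C : R →+* R[X]) ≠ ⊤ := by
  intro h
  apply hI
  rw [Ideal.eq_top_iff_one] at h ⊢
  have := Ideal.mem_map_C_iff.1 h 0
  simpa using this

lemma mem_radical_map_C {I : Ideal R} {g : R[X]} (h : ∀ k, g.coeff k ∈ I.radical) :
    g ∈ (I.map (C : R →+* R[X])).radical := by
  rw [← Polynomial.sum_C_mul_X_pow_eq g, Polynomial.sum_def]
  apply Ideal.sum_mem
  intro k _
  obtain ⟨N, hN⟩ := h k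
  refine Ideal.mem_radical_iff.2 ⟨N, ?_⟩
  rw [mul_pow, ← C_pow]
  exact Ideal.mul_mem_right _ _ (Ideal.mem_map_of_mem _ hN)

lemma C_mem_radical_map_C {I : Ideal R} {x : R}
    (h : C x ∈ (I.map (C : R →+* R[X])).radical) : x ∈ I.radical := by
  obtain ⟨N, hN⟩ := Ideal.mem_radical_iff.1 h
  rw [← C_pow] at hN
  refine Ideal.mem_radical_iff.2 ⟨N, ?_⟩
  have := Ideal.mem_map_C_iff.1 hN 0
  rwa [Polynomial.coeff_C_zero] at this

lemma fwd_aux (hR : IsPruferDomain R) {n : ℕ} (hn : 0 < n) {I : Ideal R}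
    (helem : ∀ a : Fin (n + 1) → R, (∀ k, a k ≠ 0) → (∏ k, a k) ∈ I →
      ((∏ i : Fin n, a i.castSucc) ∈ I ∨
        ∃ i : Fin n, (∏ j ∈ Finset.univ.erase i.castSucc, a j) ∈ I.radical))
    (f : Fin (n + 1) → R[X]) (hf0 : ∀ k, f k ≠ 0)
    (hmem : (∏ k, f k) ∈ I.map (C : R →+* R[X])) :
    (∏ i : Fin n, f i.castSucc) ∈ I.map (C : R →+* R[X]) ∨
      ∃ i : Fin n, (∏ j ∈ Finset.univ.erase i.castSucc, f j) ∈
        (I.map (C : R →+* R[X])).radical := by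
  have hprod : (∏ k, cI (f k)) ≤ I := by
    rw [← cI_prod hR]
    exact mem_map_C_iff_cI.1 hmem
  have hcore := strongly_core hR hn (fun k => cI (f k)) (fun k => cI_fg (f k))
    (fun k => cI_ne_bot (hf0 k)) hprod (fun a _ h0 hmemI => helem a h0 hmemI)
  rcases hcore with h | ⟨i, h⟩
  · left
    rw [mem_map_C_iff_cI, cI_prod hR]
    exact h
  · right
    refine ⟨i, mem_radical_map_C fun k => ?_⟩
    have hle : cI (∏ j ∈ Finset.univ.erase i.castSucc, f j) ≤ I.radical := by
      rw [cI_prod hR]; exact h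
    exact cI_le_iff.1 hle k

end MainAux

/-- Corollary 5.9: over a Prüfer domain `R`, an ideal `I` is `n`-absorbing
primary (resp. weakly `n`-absorbing primary) iff `I[X]` is `n`-absorbing
primary (resp. weakly `n`-absorbing primary) in `R[X]`. -/
theorem stmt_19 {R : Type*} [CommRing R] [IsDomain R] (hR : IsPruferDomain R)
    (n : ℕ) (hn : 0 < n) (I : Ideal R) (hI : I ≠ ⊤) :
    (IsNAbsorbingPrimary n I ↔
        IsNAbsorbingPrimary n (I.map (Polynomial.C : R →+* Polynomial R))) ∧
      (IsWeaklyNAbsorbingPrimary n I ↔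
        IsWeaklyNAbsorbingPrimary n (I.map (Polynomial.C : R →+* Polynomial R))) := by
  open Polynomial Finset in
  constructor
  · constructor
    · rintro ⟨hne, habs⟩
      refine ⟨map_C_ne_top hne, ?_⟩
      intro f hf
      by_cases hf0 : ∀ k, f k ≠ 0
      · exact fwd_aux hR hn (fun a _ h => habs a h) f hf0 hf
      · push_neg at hf0
        obtain ⟨k, hk⟩ := hf0
        rcases Fin.eq_castSucc_or_eq_last k with ⟨k', rfl⟩ | rfl
        · left
          rw [Finset.prod_eq_zero (Finset.mem_univ k') hk]
          exact Ideal.zero_mem _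
        · right
          refine ⟨⟨0, hn⟩, ?_⟩
          rw [Finset.prod_eq_zero
            (Finset.mem_erase.2 ⟨(Fin.castSucc_lt_last _).ne', Finset.mem_univ _⟩) hk]
          exact Ideal.zero_mem _
    · rintro ⟨hne, habs⟩
      refine ⟨hI, ?_⟩
      intro aa ha
      have hmem : (∏ k, (C (aa k) : R[X])) ∈ I.map (C : R →+* R[X]) := by
        rw [← map_prod]
        exact Ideal.mem_map_of_mem _ ha
      rcases habs (fun k => C (aa k)) hmem with h | ⟨i, h⟩
      · left
        rw [← map_prod] at h
        have := Ideal.mem_map_C_iff.1 h 0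
        rwa [Polynomial.coeff_C_zero] at this
      · right
        refine ⟨i, ?_⟩
        rw [← map_prod] at h
        exact C_mem_radical_map_C h
  · constructor
    · rintro ⟨hne, habs⟩
      refine ⟨map_C_ne_top hne, ?_⟩
      intro f hfne hf
      have hf0 : ∀ k, f k ≠ 0 := fun k hk =>
        hfne (Finset.prod_eq_zero (Finset.mem_univ k) hk)
      refine fwd_aux hR hn (fun a h0 hmemI => habs a ?_ hmemI) f hf0 hf
      exact Finset.prod_ne_zero_iff.2 fun i _ => h0 i
    · rintro ⟨hne, habs⟩
      refine ⟨hI, ?_⟩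
      intro aa hane ha
      have hmem : (∏ k, (C (aa k) : R[X])) ∈ I.map (C : R →+* R[X]) := by
        rw [← map_prod]
        exact Ideal.mem_map_of_mem _ ha
      have hCne : (∏ k, (C (aa k) : R[X])) ≠ 0 := by
        rw [← map_prod]
        exact fun h => hane (Polynomial.C_eq_zero.1 h)
      rcases habs (fun k => C (aa k)) hCne hmem with h | ⟨i, h⟩
      · left
        rw [← map_prod] at h
        have := Ideal.mem_map_C_iff.1 h 0
        rwa [Polynomial.coeff_C_zero] at this
      · right
        refine ⟨i, ?_⟩
        rw [← map_prod] at h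
        exact C_mem_radical_map_C h
end
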